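/- Let G₁ and G₂ be finite groups and p a prime. A subgroup of G₁ × G₂ of the form Q₁ × Q₂ (with Qᵢ a p-subgroup of Gᵢ) is p-radical in G₁ × G₂ if and only if Q₁ is p-radical in G₁ and Q₂ is p-radical in G₂; moreover every p-radical subgroup of G₁ × G₂ is of this product form. -/

import Mathlib

/-- `O_p(G)`: the largest normal `p`-subgroup of `G`. -/
def pCore (p : ℕ) (G : Type*) [Group G] : Subgroup G :=
  sSup {H : Subgroup G | H.Normal ∧ IsPGroup p ↥H}

/-- A `p`-subgroup `Q` of `G` is `p`-radical if `O_p(N_G(Q)) = Q`. -/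
def IsPRadicalSubgroup (p : ℕ) {G : Type*} [Group G] (Q : Subgroup G) : Prop :=
  IsPGroup p ↥Q ∧ pCore p ↥(Subgroup.normalizer (Q : Set G)) = Q.subgroupOf (Subgroup.normalizer (Q : Set G))

section Aux

variable {p : ℕ} {G G₁ G₂ : Type*} [Group G] [Group G₁] [Group G₂]

/-- Normalizer of a product is the product of normalizers. -/
lemma normalizer_prod (Q₁ : Subgroup G₁) (Q₂ : Subgroup G₂) :
    (Subgroup.normalizer (SetLike.coe (Q₁.prod Q₂))) = (Subgroup.normalizer (SetLike.coe Q₁)).prod (Subgroup.normalizer (SetLike.coe Q₂)) := by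
  ext ⟨g₁, g₂⟩
  simp only [Subgroup.mem_normalizer_iff, Subgroup.mem_prod]
  constructor
  · intro h
    constructor
    · intro x
      have := h (x, 1)
      simpa [one_mem] using this
    · intro y
      have := h (1, y)
      simpa [one_mem] using this
  · rintro ⟨h1, h2⟩ ⟨x, y⟩
    exact and_congr (h1 x) (h2 y)

lemma isPGroup_prod {A : Subgroup G₁} {B : Subgroup G₂}
    (hA : IsPGroup p A) (hB : IsPGroup p B) : IsPGroup p ↥(A.prod B) := by
  intro x
  obtain ⟨k₁, hk₁⟩ := hA ⟨x.1.1, x.2.1⟩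
  obtain ⟨k₂, hk₂⟩ := hB ⟨x.1.2, x.2.2⟩
  simp only [Subtype.ext_iff, SubmonoidClass.coe_pow, OneMemClass.coe_one] at hk₁ hk₂
  refine ⟨k₁ + k₂, ?_⟩
  rw [Subtype.ext_iff, SubmonoidClass.coe_pow, OneMemClass.coe_one]
  have : (x : G₁ × G₂) ^ p ^ (k₁ + k₂) =
      (x.1.1 ^ p ^ (k₁ + k₂), x.1.2 ^ p ^ (k₁ + k₂)) := rfl
  rw [this]
  have e1 : x.1.1 ^ p ^ (k₁ + k₂) = (x.1.1 ^ p ^ k₁) ^ p ^ k₂ := by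
    rw [← pow_mul, ← pow_add]
  have e2 : x.1.2 ^ p ^ (k₁ + k₂) = (x.1.2 ^ p ^ k₂) ^ p ^ k₁ := by
    rw [← pow_mul, ← pow_add, Nat.add_comm]
  rw [Prod.ext_iff]
  constructor
  · show _ = (1 : G₁ × G₂).1
    rw [e1, hk₁, one_pow]; rfl
  · show _ = (1 : G₁ × G₂).2
    rw [e2, hk₂, one_pow]; rfl


/-- If a subgroup `W'` of `↥N` is normal, then `N` normalizes its image in `G`. -/
lemma le_normalizer_map_subtype {N : Subgroup G} (W' : Subgroup ↥N) [hW' : W'.Normal] :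
    N ≤ (Subgroup.normalizer (SetLike.coe (W'.map N.subtype))) := by
  intro n hn
  rw [Subgroup.mem_normalizer_iff]
  intro y
  constructor
  · rintro ⟨w, hw, rfl⟩
    exact ⟨⟨n, hn⟩ * w * ⟨n, hn⟩⁻¹, hW'.conj_mem w hw ⟨n, hn⟩, rfl⟩
  · rintro ⟨w, hw, hwe⟩
    refine ⟨⟨n, hn⟩⁻¹ * w * ⟨n, hn⟩, ?_, ?_⟩
    · have := hW'.conj_mem w hw ⟨n, hn⟩⁻¹
      simpa using this
    · have : N.subtype (⟨n, hn⟩⁻¹ * w * ⟨n, hn⟩) = n⁻¹ * (N.subtype w) * n := rfl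
      rw [this, hwe]
      group

/-- Key lemma: if `Q` is p-radical, `W` is a p-subgroup whose normalizer contains `N_G(Q)`,
then `W ⊓ N_G(Q) ≤ Q`. -/
lemma radical_inf_le {Q W : Subgroup G}
    (hrad : pCore p ↥(Subgroup.normalizer (SetLike.coe Q)) = Q.subgroupOf (Subgroup.normalizer (SetLike.coe Q)))
    (hW : IsPGroup p ↥W) (hWnorm : (Subgroup.normalizer (SetLike.coe Q)) ≤ (Subgroup.normalizer (SetLike.coe W))) :
    W ⊓ (Subgroup.normalizer (SetLike.coe Q)) ≤ Q := by
  set N := (Subgroup.normalizer (SetLike.coe Q)) with hN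
  have hnormal : ((W ⊓ N).subgroupOf N).Normal := by
    constructor
    intro x hx g
    rw [Subgroup.mem_subgroupOf] at hx ⊢
    have hcoe : ((g * x * g⁻¹ : ↥N) : G) = (g : G) * (x : G) * (g : G)⁻¹ := rfl
    rw [hcoe]
    refine ⟨(Subgroup.mem_normalizer_iff.mp (hWnorm g.2) (x : G)).mp hx.1, ?_⟩
    exact N.mul_mem (N.mul_mem g.2 hx.2) (N.inv_mem g.2)
  have hpg : IsPGroup p ↥((W ⊓ N).subgroupOf N) :=
    (hW.to_inf_left (K := N)).comap_subtype
  have hle : (W ⊓ N).subgroupOf N ≤ pCore p ↥N := le_sSup ⟨hnormal, hpg⟩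
  rw [hrad] at hle
  intro x hx
  have hxN : x ∈ N := hx.2
  have h2 : (⟨x, hxN⟩ : ↥N) ∈ Q.subgroupOf N := by
    refine hle ?_
    rw [Subgroup.mem_subgroupOf]
    exact hx
  simpa [Subgroup.mem_subgroupOf] using h2

/-- The subgroup itself is always contained in the p-core of its normalizer. -/
lemma subgroupOf_le_pCore {Q : Subgroup G} (hQ : IsPGroup p ↥Q) :
    Q.subgroupOf (Subgroup.normalizer (SetLike.coe Q)) ≤ pCore p ↥(Subgroup.normalizer (SetLike.coe Q)) :=
  le_sSup ⟨Subgroup.normal_in_normalizer, hQ.comap_subtype⟩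

lemma left_le_map_fst_prod (A : Subgroup G₁) (B : Subgroup G₂) :
    A ≤ (A.prod B).map (MonoidHom.fst G₁ G₂) := fun a ha =>
  ⟨(a, 1), ⟨ha, one_mem B⟩, rfl⟩

lemma map_fst_prod_le (A : Subgroup G₁) (B : Subgroup G₂) :
    (A.prod B).map (MonoidHom.fst G₁ G₂) ≤ A := by
  rintro _ ⟨⟨a, b⟩, ⟨ha, hb⟩, rfl⟩
  exact ha

lemma right_le_map_snd_prod (A : Subgroup G₁) (B : Subgroup G₂) :
    B ≤ (A.prod B).map (MonoidHom.snd G₁ G₂) := fun b hb =>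
  ⟨(1, b), ⟨one_mem A, hb⟩, rfl⟩

lemma map_snd_prod_le (A : Subgroup G₁) (B : Subgroup G₂) :
    (A.prod B).map (MonoidHom.snd G₁ G₂) ≤ B := by
  rintro _ ⟨⟨a, b⟩, ⟨ha, hb⟩, rfl⟩
  exact hb

lemma le_prod_map (Q : Subgroup (G₁ × G₂)) :
    Q ≤ (Q.map (MonoidHom.fst G₁ G₂)).prod (Q.map (MonoidHom.snd G₁ G₂)) := fun x hx =>
  ⟨⟨x, hx, rfl⟩, ⟨x, hx, rfl⟩⟩

end Aux

/-- For finite groups `G₁, G₂` and a prime `p`: a product `Q₁ × Q₂` of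
`p`-subgroups is `p`-radical in `G₁ × G₂` iff each `Qᵢ` is `p`-radical in `Gᵢ`; moreover
every `p`-radical subgroup of `G₁ × G₂` is of this product form. -/
theorem pRadical_prod {p : ℕ} (hp : p.Prime)
    {G₁ G₂ : Type*} [Group G₁] [Group G₂] [Finite G₁] [Finite G₂]
    (Q₁ : Subgroup G₁) (Q₂ : Subgroup G₂)
    (h₁ : IsPGroup p ↥Q₁) (h₂ : IsPGroup p ↥Q₂) :
    (IsPRadicalSubgroup p (Q₁.prod Q₂) ↔ IsPRadicalSubgroup p Q₁ ∧ IsPRadicalSubgroup p Q₂) ∧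
    ∀ Q : Subgroup (G₁ × G₂), IsPRadicalSubgroup p Q →
      ∃ (R₁ : Subgroup G₁) (R₂ : Subgroup G₂), Q = R₁.prod R₂ := by
  haveI : Fact p.Prime := ⟨hp⟩
  constructor
  · constructor
    · -- forward direction
      rintro ⟨hpg, hcore⟩
      constructor
      · -- Q₁ is radical
        refine ⟨h₁, le_antisymm ?_ (subgroupOf_le_pCore h₁)⟩
        apply sSup_le
        rintro V' ⟨hVnormal, hVp⟩
        haveI := hVnormal
        have hVle : V'.map (Subgroup.normalizer (SetLike.coe Q₁)).subtype ≤ (Subgroup.normalizer (SetLike.coe Q₁)) := Subgroup.map_subtype_le _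
        have hVnorm : (Subgroup.normalizer (SetLike.coe Q₁)) ≤ (Subgroup.normalizer (SetLike.coe (V'.map (Subgroup.normalizer (SetLike.coe Q₁)).subtype))) :=
          le_normalizer_map_subtype V'
        have hVpg : IsPGroup p ↥(V'.map (Subgroup.normalizer (SetLike.coe Q₁)).subtype) := hVp.map _
        have hWp : IsPGroup p ↥((V'.map (Subgroup.normalizer (SetLike.coe Q₁)).subtype).prod Q₂) :=
          isPGroup_prod hVpg h₂
        have hWnorm : (Subgroup.normalizer (SetLike.coe (Q₁.prod Q₂))) ≤
            (Subgroup.normalizer (SetLike.coe ((V'.map (Subgroup.normalizer (SetLike.coe Q₁)).subtype).prod Q₂))) := by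
          rw [normalizer_prod Q₁ Q₂, normalizer_prod]
          exact Subgroup.prod_mono hVnorm le_rfl
        have hinf := radical_inf_le hcore hWp hWnorm
        intro v hv
        rw [Subgroup.mem_subgroupOf]
        have hvW : ((v : G₁), (1 : G₂)) ∈ (V'.map (Subgroup.normalizer (SetLike.coe Q₁)).subtype).prod Q₂ :=
          ⟨⟨v, hv, rfl⟩, one_mem Q₂⟩
        have hvN : ((v : G₁), (1 : G₂)) ∈ (Subgroup.normalizer (SetLike.coe (Q₁.prod Q₂))) := by
          rw [normalizer_prod]
          exact ⟨v.2, one_mem _⟩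
        exact (hinf ⟨hvW, hvN⟩).1
      · -- Q₂ is radical
        refine ⟨h₂, le_antisymm ?_ (subgroupOf_le_pCore h₂)⟩
        apply sSup_le
        rintro V' ⟨hVnormal, hVp⟩
        haveI := hVnormal
        have hVle : V'.map (Subgroup.normalizer (SetLike.coe Q₂)).subtype ≤ (Subgroup.normalizer (SetLike.coe Q₂)) := Subgroup.map_subtype_le _
        have hVnorm : (Subgroup.normalizer (SetLike.coe Q₂)) ≤ (Subgroup.normalizer (SetLike.coe (V'.map (Subgroup.normalizer (SetLike.coe Q₂)).subtype))) :=
          le_normalizer_map_subtype V'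
        have hVpg : IsPGroup p ↥(V'.map (Subgroup.normalizer (SetLike.coe Q₂)).subtype) := hVp.map _
        have hWp : IsPGroup p ↥(Q₁.prod (V'.map (Subgroup.normalizer (SetLike.coe Q₂)).subtype)) :=
          isPGroup_prod h₁ hVpg
        have hWnorm : (Subgroup.normalizer (SetLike.coe (Q₁.prod Q₂))) ≤
            (Subgroup.normalizer (SetLike.coe (Q₁.prod (V'.map (Subgroup.normalizer (SetLike.coe Q₂)).subtype)))) := by
          rw [normalizer_prod Q₁ Q₂, normalizer_prod]
          exact Subgroup.prod_mono le_rfl hVnorm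
        have hinf := radical_inf_le hcore hWp hWnorm
        intro v hv
        rw [Subgroup.mem_subgroupOf]
        have hvW : ((1 : G₁), (v : G₂)) ∈ Q₁.prod (V'.map (Subgroup.normalizer (SetLike.coe Q₂)).subtype) :=
          ⟨one_mem Q₁, ⟨v, hv, rfl⟩⟩
        have hvN : ((1 : G₁), (v : G₂)) ∈ (Subgroup.normalizer (SetLike.coe (Q₁.prod Q₂))) := by
          rw [normalizer_prod]
          exact ⟨one_mem _, v.2⟩
        exact (hinf ⟨hvW, hvN⟩).2
    · -- reverse direction
      rintro ⟨⟨hp1, hc1⟩, ⟨hp2, hc2⟩⟩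
      refine ⟨isPGroup_prod h₁ h₂, le_antisymm ?_ (subgroupOf_le_pCore (isPGroup_prod h₁ h₂))⟩
      apply sSup_le
      rintro W' ⟨hWnormal, hWp⟩
      haveI := hWnormal
      have hNprod : (Subgroup.normalizer (SetLike.coe (Q₁.prod Q₂))) = (Subgroup.normalizer (SetLike.coe Q₁)).prod (Subgroup.normalizer (SetLike.coe Q₂)) :=
        normalizer_prod Q₁ Q₂
      have hWle : (W'.map (Subgroup.normalizer (SetLike.coe (Q₁.prod Q₂))).subtype) ≤ (Subgroup.normalizer (SetLike.coe (Q₁.prod Q₂))) := Subgroup.map_subtype_le _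
      have hWnorm : (Subgroup.normalizer (SetLike.coe (Q₁.prod Q₂))) ≤ (Subgroup.normalizer (SetLike.coe (W'.map (Subgroup.normalizer (SetLike.coe (Q₁.prod Q₂))).subtype))) := le_normalizer_map_subtype W'
      have hWpg : IsPGroup p ↥(W'.map (Subgroup.normalizer (SetLike.coe (Q₁.prod Q₂))).subtype) := hWp.map _
      have hP₁pg : IsPGroup p ↥((W'.map (Subgroup.normalizer (SetLike.coe (Q₁.prod Q₂))).subtype).map (MonoidHom.fst G₁ G₂)) := hWpg.map _
      have hP₂pg : IsPGroup p ↥((W'.map (Subgroup.normalizer (SetLike.coe (Q₁.prod Q₂))).subtype).map (MonoidHom.snd G₁ G₂)) := hWpg.map _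
      have hP₁norm : (Subgroup.normalizer (SetLike.coe Q₁)) ≤ (Subgroup.normalizer (SetLike.coe ((W'.map (Subgroup.normalizer (SetLike.coe (Q₁.prod Q₂))).subtype).map (MonoidHom.fst G₁ G₂)))) := by
        calc (Subgroup.normalizer (SetLike.coe Q₁))
            ≤ ((Subgroup.normalizer (SetLike.coe Q₁)).prod (Subgroup.normalizer (SetLike.coe Q₂))).map (MonoidHom.fst G₁ G₂) :=
              left_le_map_fst_prod _ _
          _ = (Subgroup.normalizer (SetLike.coe (Q₁.prod Q₂))).map (MonoidHom.fst G₁ G₂) := by rw [hNprod]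
          _ ≤ (Subgroup.normalizer (SetLike.coe (W'.map (Subgroup.normalizer (SetLike.coe (Q₁.prod Q₂))).subtype))).map (MonoidHom.fst G₁ G₂) := Subgroup.map_mono hWnorm
          _ ≤ (Subgroup.normalizer (SetLike.coe ((W'.map (Subgroup.normalizer (SetLike.coe (Q₁.prod Q₂))).subtype).map (MonoidHom.fst G₁ G₂)))) := Subgroup.le_normalizer_map _
      have hP₂norm : (Subgroup.normalizer (SetLike.coe Q₂)) ≤ (Subgroup.normalizer (SetLike.coe ((W'.map (Subgroup.normalizer (SetLike.coe (Q₁.prod Q₂))).subtype).map (MonoidHom.snd G₁ G₂)))) := by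
        calc (Subgroup.normalizer (SetLike.coe Q₂))
            ≤ ((Subgroup.normalizer (SetLike.coe Q₁)).prod (Subgroup.normalizer (SetLike.coe Q₂))).map (MonoidHom.snd G₁ G₂) :=
              right_le_map_snd_prod _ _
          _ = (Subgroup.normalizer (SetLike.coe (Q₁.prod Q₂))).map (MonoidHom.snd G₁ G₂) := by rw [hNprod]
          _ ≤ (Subgroup.normalizer (SetLike.coe (W'.map (Subgroup.normalizer (SetLike.coe (Q₁.prod Q₂))).subtype))).map (MonoidHom.snd G₁ G₂) := Subgroup.map_mono hWnorm
          _ ≤ (Subgroup.normalizer (SetLike.coe ((W'.map (Subgroup.normalizer (SetLike.coe (Q₁.prod Q₂))).subtype).map (MonoidHom.snd G₁ G₂)))) := Subgroup.le_normalizer_map _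
      have hP₁Q : (W'.map (Subgroup.normalizer (SetLike.coe (Q₁.prod Q₂))).subtype).map (MonoidHom.fst G₁ G₂) ≤ Q₁ := by
        refine le_trans (le_inf le_rfl ?_) (radical_inf_le hc1 hP₁pg hP₁norm)
        calc (W'.map (Subgroup.normalizer (SetLike.coe (Q₁.prod Q₂))).subtype).map (MonoidHom.fst G₁ G₂)
            ≤ (Subgroup.normalizer (SetLike.coe (Q₁.prod Q₂))).map (MonoidHom.fst G₁ G₂) := Subgroup.map_mono hWle
          _ = ((Subgroup.normalizer (SetLike.coe Q₁)).prod (Subgroup.normalizer (SetLike.coe Q₂))).map (MonoidHom.fst G₁ G₂) := by rw [hNprod]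
          _ ≤ (Subgroup.normalizer (SetLike.coe Q₁)) := map_fst_prod_le _ _
      have hP₂Q : (W'.map (Subgroup.normalizer (SetLike.coe (Q₁.prod Q₂))).subtype).map (MonoidHom.snd G₁ G₂) ≤ Q₂ := by
        refine le_trans (le_inf le_rfl ?_) (radical_inf_le hc2 hP₂pg hP₂norm)
        calc (W'.map (Subgroup.normalizer (SetLike.coe (Q₁.prod Q₂))).subtype).map (MonoidHom.snd G₁ G₂)
            ≤ (Subgroup.normalizer (SetLike.coe (Q₁.prod Q₂))).map (MonoidHom.snd G₁ G₂) := Subgroup.map_mono hWle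
          _ = ((Subgroup.normalizer (SetLike.coe Q₁)).prod (Subgroup.normalizer (SetLike.coe Q₂))).map (MonoidHom.snd G₁ G₂) := by rw [hNprod]
          _ ≤ (Subgroup.normalizer (SetLike.coe Q₂)) := map_snd_prod_le _ _
      intro x hx
      rw [Subgroup.mem_subgroupOf, Subgroup.mem_prod]
      have hxW : ((x : ↥(Subgroup.normalizer (SetLike.coe (Q₁.prod Q₂)))) : G₁ × G₂) ∈ (W'.map (Subgroup.normalizer (SetLike.coe (Q₁.prod Q₂))).subtype) := ⟨x, hx, rfl⟩
      exact ⟨hP₁Q ⟨_, hxW, rfl⟩, hP₂Q ⟨_, hxW, rfl⟩⟩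
  · -- part 2 : every radical subgroup is a product
    rintro Q ⟨hQp, hQcore⟩
    refine ⟨Q.map (MonoidHom.fst G₁ G₂), Q.map (MonoidHom.snd G₁ G₂), ?_⟩
    set S := (Q.map (MonoidHom.fst G₁ G₂)).prod (Q.map (MonoidHom.snd G₁ G₂)) with hSdef
    have hQS : Q ≤ S := le_prod_map Q
    have hSp : IsPGroup p ↥S := isPGroup_prod (hQp.map _) (hQp.map _)
    have hconj : ∀ m ∈ (Subgroup.normalizer (SetLike.coe Q)), ∀ x ∈ S, m * x * m⁻¹ ∈ S := by
      intro m hm x hx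
      rw [hSdef, Subgroup.mem_prod] at hx ⊢
      obtain ⟨⟨q, hq, hq1⟩, ⟨r, hr, hr2⟩⟩ := hx
      constructor
      · refine ⟨m * q * m⁻¹, (Subgroup.mem_normalizer_iff.mp hm q).mp hq, ?_⟩
        show m.1 * q.1 * m.1⁻¹ = (m * x * m⁻¹).1
        rw [show (MonoidHom.fst G₁ G₂) q = q.1 from rfl] at hq1
        rw [hq1]
        rfl
      · refine ⟨m * r * m⁻¹, (Subgroup.mem_normalizer_iff.mp hm r).mp hr, ?_⟩
        show m.2 * r.2 * m.2⁻¹ = (m * x * m⁻¹).2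
        rw [show (MonoidHom.snd G₁ G₂) r = r.2 from rfl] at hr2
        rw [hr2]
        rfl
    have hnormS : (Subgroup.normalizer (SetLike.coe Q)) ≤ (Subgroup.normalizer (SetLike.coe S)) := by
      intro n hn
      rw [Subgroup.mem_normalizer_iff]
      intro x
      constructor
      · exact fun hx => hconj n hn x hx
      · intro hx
        have h2 := hconj n⁻¹ ((Subgroup.normalizer (SetLike.coe Q)).inv_mem hn) _ hx
        have h3 : n⁻¹ * (n * x * n⁻¹) * n⁻¹⁻¹ = x := by group
        rwa [h3] at h2
    have hSQ : S ⊓ (Subgroup.normalizer (SetLike.coe Q)) ≤ Q := radical_inf_le hQcore hSp hnormS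
    refine le_antisymm hQS ?_
    by_contra hne
    have hNC : NormalizerCondition ↥S := normalizerCondition_of_isNilpotent (h := hSp.isNilpotent)
    have hlt : Q.subgroupOf S < ⊤ := by
      refine lt_of_le_of_ne le_top ?_
      intro heq
      apply hne
      intro x hxS
      have hmem : (⟨x, hxS⟩ : ↥S) ∈ Q.subgroupOf S := heq ▸ Subgroup.mem_top _
      rwa [Subgroup.mem_subgroupOf] at hmem
    obtain ⟨x, hx_mem, hx_not⟩ := SetLike.exists_of_lt (hNC _ hlt)
    have hxN : (x : G₁ × G₂) ∈ (Subgroup.normalizer (SetLike.coe Q)) := by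
      rw [Subgroup.mem_normalizer_iff]
      intro y
      constructor
      · intro hy
        have h4 := (Subgroup.mem_normalizer_iff.mp hx_mem ⟨y, hQS hy⟩).mp
          (by rw [Subgroup.mem_subgroupOf]; exact hy)
        rw [Subgroup.mem_subgroupOf] at h4
        exact h4
      · intro hy
        have hzS : (x : G₁ × G₂) * y * (x : G₁ × G₂)⁻¹ ∈ S := hQS hy
        have hyS : y ∈ S := by
          have h5 : y = (x : G₁ × G₂)⁻¹ * ((x : G₁ × G₂) * y * (x : G₁ × G₂)⁻¹) * x := by group
          rw [h5]
          exact S.mul_mem (S.mul_mem (S.inv_mem x.2) hzS) x.2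
        have h6 := (Subgroup.mem_normalizer_iff.mp hx_mem ⟨y, hyS⟩).mpr
          (by rw [Subgroup.mem_subgroupOf]; exact hy)
        rw [Subgroup.mem_subgroupOf] at h6
        exact h6
    have hxQ : (x : G₁ × G₂) ∈ Q := hSQ ⟨x.2, hxN⟩
    exact hx_not (by rw [Subgroup.mem_subgroupOf]; exact hxQ)
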